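/- Let x, y ∈ ℝ^d satisfy ‖x‖ ≤ 1, ‖y‖ ≤ 1, and ‖x − y‖ ≤ 1/3, and let k ≥ 1. Then ‖x‖^{2k} − 2⟨x, y⟩^k + ‖y‖^{2k} ≤ 12 · 2^k ‖x − y‖². (The left-hand side equals the squared Frobenius norm ‖x^{⊗k} − y^{⊗k}‖_F² = Σ_{j_1,…,j_k} (x_{j_1}⋯x_{j_k} − y_{j_1}⋯y_{j_k})² of the difference of k-fold tensor powers.) -/

import Mathlib

open MeasureTheory Filter Set
noncomputable section

private lemma geomS_bound (a c : ℝ) (ha : |a| ≤ 1) (hc : |c| ≤ 1) (k : ℕ) :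
    |∑ i ∈ Finset.range k, a ^ i * c ^ (k - 1 - i)| ≤ k := by
  calc |∑ i ∈ Finset.range k, a ^ i * c ^ (k - 1 - i)|
      ≤ ∑ i ∈ Finset.range k, |a ^ i * c ^ (k - 1 - i)| :=
        Finset.abs_sum_le_sum_abs _ _
    _ ≤ ∑ _i ∈ Finset.range k, (1 : ℝ) := by
        apply Finset.sum_le_sum
        intro i _
        rw [abs_mul, abs_pow, abs_pow]
        exact mul_le_one₀ (pow_le_one₀ (abs_nonneg _) ha)
          (pow_nonneg (abs_nonneg _) _) (pow_le_one₀ (abs_nonneg _) hc)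
    _ = k := by simp

private lemma pow_sub_pow_bound (a b : ℝ) (ha : |a| ≤ 1) (hb : |b| ≤ 1) (i : ℕ) :
    |b ^ i - a ^ i| ≤ i * |b - a| := by
  rw [← geom_sum₂_mul, abs_mul]
  exact mul_le_mul_of_nonneg_right (geomS_bound b a hb ha i) (abs_nonneg _)

private lemma nat_bound (k : ℕ) : (k : ℝ) + 2 * (k : ℝ) ^ 2 ≤ 12 * 2 ^ k := by
  induction k with
  | zero => norm_num
  | succ n ih =>
    have h2 : 4 * (n : ℝ) + 3 ≤ 12 * 2 ^ n := by
      have hn : (n : ℝ) < 2 ^ n := by exact_mod_cast (Nat.lt_two_pow_self (n := n))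
      have h1 : (1 : ℝ) ≤ 2 ^ n := one_le_pow₀ (by norm_num)
      nlinarith
    have hp : (2 : ℝ) ^ (n + 1) = 2 * 2 ^ n := by rw [pow_succ]; ring
    push_cast
    nlinarith [hp, ih, h2]


private lemma key_ineq (a b c ε : ℝ) (k : ℕ)
    (ha1 : |a| ≤ 1) (hb1 : |b| ≤ 1) (hc1 : |c| ≤ 1) (hε0 : 0 ≤ ε)
    (hsum : a - c + (b - c) = ε ^ 2) (hbc : |b - c| ≤ ε) (hba : |b - a| ≤ 2 * ε) :
    a ^ k - 2 * c ^ k + b ^ k ≤ 12 * 2 ^ k * ε ^ 2 := by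
  have hfa : (∑ i ∈ Finset.range k, a ^ i * c ^ (k - 1 - i)) * (a - c) = a ^ k - c ^ k :=
    geom_sum₂_mul a c k
  have hfb : (∑ i ∈ Finset.range k, b ^ i * c ^ (k - 1 - i)) * (b - c) = b ^ k - c ^ k :=
    geom_sum₂_mul b c k
  obtain ⟨Sa, hSa_def⟩ : ∃ S, S = ∑ i ∈ Finset.range k, a ^ i * c ^ (k - 1 - i) := ⟨_, rfl⟩
  obtain ⟨Sb, hSb_def⟩ : ∃ S, S = ∑ i ∈ Finset.range k, b ^ i * c ^ (k - 1 - i) := ⟨_, rfl⟩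
  rw [← hSa_def] at hfa
  rw [← hSb_def] at hfb
  have hSa_bd : |Sa| ≤ k := hSa_def ▸ geomS_bound a c ha1 hc1 k
  have hSdiff : |Sb - Sa| ≤ k * (k * (2 * ε)) := by
    rw [hSb_def, hSa_def, ← Finset.sum_sub_distrib]
    calc |∑ i ∈ Finset.range k, (b ^ i * c ^ (k - 1 - i) - a ^ i * c ^ (k - 1 - i))|
        ≤ ∑ i ∈ Finset.range k, |b ^ i * c ^ (k - 1 - i) - a ^ i * c ^ (k - 1 - i)| :=
          Finset.abs_sum_le_sum_abs _ _
      _ ≤ ∑ _i ∈ Finset.range k, (k : ℝ) * (2 * ε) := by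
          apply Finset.sum_le_sum
          intro i hi
          rw [← sub_mul, abs_mul]
          have h1 : |b ^ i - a ^ i| ≤ i * |b - a| := pow_sub_pow_bound a b ha1 hb1 i
          have h2 : |c ^ (k - 1 - i)| ≤ 1 := by
            rw [abs_pow]; exact pow_le_one₀ (abs_nonneg _) hc1
          have h3 : (i : ℝ) ≤ k := by
            exact_mod_cast (Finset.mem_range.mp hi).le
          calc |b ^ i - a ^ i| * |c ^ (k - 1 - i)|
              ≤ |b ^ i - a ^ i| * 1 := mul_le_mul_of_nonneg_left h2 (abs_nonneg _)
            _ = |b ^ i - a ^ i| := mul_one _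
            _ ≤ i * |b - a| := h1
            _ ≤ k * (2 * ε) := mul_le_mul h3 hba (abs_nonneg _) (Nat.cast_nonneg _)
      _ = k * (k * (2 * ε)) := by
          rw [Finset.sum_const, Finset.card_range]; push_cast; ring
  have hLHS : a ^ k - 2 * c ^ k + b ^ k = ε ^ 2 * Sa + (b - c) * (Sb - Sa) := by
    linear_combination Sa * hsum - hfa - hfb
  rw [hLHS]
  have h1 : ε ^ 2 * Sa ≤ ε ^ 2 * k :=
    mul_le_mul_of_nonneg_left (le_trans (le_abs_self _) hSa_bd) (sq_nonneg ε)
  have h2 : (b - c) * (Sb - Sa) ≤ ε * (k * (k * (2 * ε))) := by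
    calc (b - c) * (Sb - Sa) ≤ |(b - c) * (Sb - Sa)| := le_abs_self _
      _ = |b - c| * |Sb - Sa| := abs_mul _ _
      _ ≤ ε * (k * (k * (2 * ε))) := mul_le_mul hbc hSdiff (abs_nonneg _) hε0
  have h3 : (k : ℝ) + 2 * (k : ℝ) ^ 2 ≤ 12 * 2 ^ k := nat_bound k
  have h4 : ((k : ℝ) + 2 * (k : ℝ) ^ 2) * ε ^ 2 ≤ 12 * 2 ^ k * ε ^ 2 :=
    mul_le_mul_of_nonneg_right h3 (sq_nonneg ε)
  nlinarith [h1, h2, h4]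

/-- For `x, y ∈ ℝ^d` with `‖x‖ ≤ 1`, `‖y‖ ≤ 1` and `‖x − y‖ ≤ 1/3`, and
`k ≥ 1`, the squared Frobenius norm of the difference of `k`-fold tensor powers,
`‖x^{⊗k} − y^{⊗k}‖_F² = ‖x‖^{2k} − 2⟨x,y⟩^k + ‖y‖^{2k}`, is at most `12 · 2^k ‖x − y‖²`. -/
theorem tensor_power_difference_bound (d k : ℕ) (hk : 1 ≤ k)
    (x y : EuclideanSpace ℝ (Fin d)) (hx : ‖x‖ ≤ 1) (hy : ‖y‖ ≤ 1)
    (hxy : ‖x - y‖ ≤ 1 / 3) :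
    ‖x‖ ^ (2 * k) - 2 * (inner ℝ x y : ℝ) ^ k + ‖y‖ ^ (2 * k)
      ≤ 12 * 2 ^ k * ‖x - y‖ ^ 2 := by
  have hpx : ‖x‖ ^ (2 * k) = (‖x‖ ^ 2) ^ k := by rw [← pow_mul]
  have hpy : ‖y‖ ^ (2 * k) = (‖y‖ ^ 2) ^ k := by rw [← pow_mul]
  rw [hpx, hpy]
  have hε0 : (0 : ℝ) ≤ ‖x - y‖ := norm_nonneg _
  apply key_ineq
  · rw [abs_of_nonneg (by positivity)]
    exact pow_le_one₀ (norm_nonneg _) hx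
  · rw [abs_of_nonneg (by positivity)]
    exact pow_le_one₀ (norm_nonneg _) hy
  · exact (abs_real_inner_le_norm x y).trans (mul_le_one₀ hx (norm_nonneg _) hy)
  · exact hε0
  · rw [@norm_sub_sq_real]; ring
  · have h1 : ‖y‖ ^ 2 - (inner ℝ x y : ℝ) = (inner ℝ (y - x) y : ℝ) := by
      rw [inner_sub_left, real_inner_self_eq_norm_sq, real_inner_comm y x]
    rw [h1]
    refine (abs_real_inner_le_norm _ _).trans ?_
    rw [show y - x = -(x - y) by abel, norm_neg]
    calc ‖x - y‖ * ‖y‖ ≤ ‖x - y‖ * 1 := mul_le_mul_of_nonneg_left hy hε0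
      _ = ‖x - y‖ := mul_one _
  · have h1 : ‖y‖ ^ 2 - ‖x‖ ^ 2 = (inner ℝ (y - x) (y + x) : ℝ) := by
      rw [inner_sub_left, inner_add_right, inner_add_right,
        real_inner_self_eq_norm_sq, real_inner_self_eq_norm_sq,
        real_inner_comm y x]
      ring
    rw [h1]
    refine (abs_real_inner_le_norm _ _).trans ?_
    rw [show y - x = -(x - y) by abel, norm_neg]
    have h2 : ‖y + x‖ ≤ 2 := by
      calc ‖y + x‖ ≤ ‖y‖ + ‖x‖ := norm_add_le _ _
        _ ≤ 2 := by linarith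
    calc ‖x - y‖ * ‖y + x‖ ≤ ‖x - y‖ * 2 := mul_le_mul_of_nonneg_left h2 hε0
      _ = 2 * ‖x - y‖ := by ring
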